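/- Let I ⊆ (0,∞) be an open interval and π, χ : I → ℝ differentiable functions such that, for all z ∈ I: π(z) > 0, π(z) ≠ χ(z), and D(z) := π(z)(χ(z)−1) + χ(z) ≠ 0. Suppose that on I the algebraic constraint z² = 1/π(z)² − 3/π(z) + π(z)/D(z) − 3 and the differential equation z·π'(z) = (3+z²)π(z)² + 2π(z) − 1 both hold. Then on I: π³(π+1)(π−χ)·χ'(z) = [α·χ³ + β·χ² + γ·χ + δ]·π'(z), where α = 3(1+4π+5π²+2π³), β = −π(11+29π+17π²), γ = π²(13+17π) and δ = −5π³, all evaluated at π = π(z), χ = χ(z). -/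

import Mathlib

noncomputable section

/-- The hydrodynamic characterisation of the Synge gas: if `π(z)` and `χ(z)` satisfy the
algebraic constraint `z² = 1/π² − 3/π + π/D − 3` (with `D = π(χ−1)+χ`) and the ODE
`zπ' = (3+z²)π² + 2π − 1`, then
`π³(π+1)(π−χ)χ' = (αχ³ + βχ² + γχ + δ)π'` with the stated coefficients. -/
theorem synge_indicatrix_ode
    (I : Set ℝ) (hIopen : IsOpen I) (hIconn : I.OrdConnected)
    (hIpos : I ⊆ Set.Ioi (0 : ℝ))
    (π χ : ℝ → ℝ)
    (hπdiff : ∀ z ∈ I, DifferentiableAt ℝ π z)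
    (hχdiff : ∀ z ∈ I, DifferentiableAt ℝ χ z)
    (hπpos : ∀ z ∈ I, 0 < π z)
    (hπχ : ∀ z ∈ I, π z ≠ χ z)
    (hD : ∀ z ∈ I, π z * (χ z - 1) + χ z ≠ 0)
    (hconstraint : ∀ z ∈ I,
      z ^ 2 = 1 / π z ^ 2 - 3 / π z + π z / (π z * (χ z - 1) + χ z) - 3)
    (hode : ∀ z ∈ I, z * deriv π z = (3 + z ^ 2) * π z ^ 2 + 2 * π z - 1) :
    ∀ z ∈ I,
      π z ^ 3 * (π z + 1) * (π z - χ z) * deriv χ z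
        = (3 * (1 + 4 * π z + 5 * π z ^ 2 + 2 * π z ^ 3) * χ z ^ 3
            - π z * (11 + 29 * π z + 17 * π z ^ 2) * χ z ^ 2
            + π z ^ 2 * (13 + 17 * π z) * χ z
            - 5 * π z ^ 3) * deriv π z := by
  intro z hz
  have hzpos : (0 : ℝ) < z := hIpos hz
  have hz0 : z ≠ 0 := ne_of_gt hzpos
  have hppos : 0 < π z := hπpos z hz
  have hp0 : π z ≠ 0 := ne_of_gt hppos
  have hp1 : π z + 1 ≠ 0 := by positivity
  have hD0 : π z * (χ z - 1) + χ z ≠ 0 := hD z hz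
  have hpc : π z - χ z ≠ 0 := sub_ne_zero.mpr (hπχ z hz)
  have hp := (hπdiff z hz).hasDerivAt
  have hc := (hχdiff z hz).hasDerivAt
  set a := deriv π z with ha
  set b := deriv χ z with hb
  -- derivative of the right-hand side of the constraint
  have t1 := (hasDerivAt_const z (1 : ℝ)).div (hp.pow 2) (pow_ne_zero 2 hp0)
  have t2 := (hasDerivAt_const z (3 : ℝ)).div hp hp0
  have hden : HasDerivAt (fun w => π w * (χ w - 1) + χ w)
      (a * (χ z - 1) + π z * b + b) z := (hp.mul (hc.sub_const 1)).add hc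
  have t3 := hp.div hden hD0
  have hg := ((t1.sub t2).add t3).sub_const (3 : ℝ)
  -- the two sides of the constraint agree near z, so their derivatives agree
  have heq : (fun w : ℝ => w ^ 2) =ᶠ[nhds z]
      (fun w => 1 / π w ^ 2 - 3 / π w + π w / (π w * (χ w - 1) + χ w) - 3) :=
    Filter.eventuallyEq_of_mem (hIopen.mem_nhds hz) (fun w hw => hconstraint w hw)
  have hder := heq.deriv_eq
  rw [HasDerivAt.deriv (f := fun w : ℝ => 1 / π w ^ 2 - 3 / π w + π w / (π w * (χ w - 1) + χ w) - 3) hg] at hder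
  have hsq : deriv (fun w : ℝ => w ^ 2) z = 2 * z := by
    simp [deriv_pow]
  -- clean form of the differentiated constraint
  have h3 : 2 * z = (-2 / π z ^ 3 + 3 / π z ^ 2
        + χ z / (π z * (χ z - 1) + χ z) ^ 2) * a
      + (-(π z * (π z + 1)) / (π z * (χ z - 1) + χ z) ^ 2) * b := by
    rw [← hsq, hder, Pi.pow_apply]
    field_simp
    ring
  have hB0 : -(π z * (π z + 1)) / (π z * (χ z - 1) + χ z) ^ 2 ≠ 0 := by
    apply div_ne_zero
    · simp only [neg_ne_zero]; exact mul_ne_zero hp0 hp1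
    · exact pow_ne_zero 2 hD0
  have hbval : b = (2 * z - (-2 / π z ^ 3 + 3 / π z ^ 2
        + χ z / (π z * (χ z - 1) + χ z) ^ 2) * a)
      / (-(π z * (π z + 1)) / (π z * (χ z - 1) + χ z) ^ 2) := by
    rw [eq_div_iff hB0]
    linear_combination -h3
  have hc1 := hconstraint z hz
  have hc2 := hode z hz
  -- the key z-free algebraic identity
  have main : π z ^ 3 * (π z + 1) * (π z - χ z) *
      ((2 * (1 / π z ^ 2 - 3 / π z + π z / (π z * (χ z - 1) + χ z) - 3)
          - (-2 / π z ^ 3 + 3 / π z ^ 2 + χ z / (π z * (χ z - 1) + χ z) ^ 2)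
            * ((3 + (1 / π z ^ 2 - 3 / π z + π z / (π z * (χ z - 1) + χ z) - 3))
                * π z ^ 2 + 2 * π z - 1))
        / (-(π z * (π z + 1)) / (π z * (χ z - 1) + χ z) ^ 2))
      = (3 * (1 + 4 * π z + 5 * π z ^ 2 + 2 * π z ^ 3) * χ z ^ 3
            - π z * (11 + 29 * π z + 17 * π z ^ 2) * χ z ^ 2
            + π z ^ 2 * (13 + 17 * π z) * χ z
            - 5 * π z ^ 3)
        * ((3 + (1 / π z ^ 2 - 3 / π z + π z / (π z * (χ z - 1) + χ z) - 3))
              * π z ^ 2 + 2 * π z - 1) := by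
    field_simp
    ring
  apply mul_left_cancel₀ hz0
  calc z * (π z ^ 3 * (π z + 1) * (π z - χ z) * b)
      = π z ^ 3 * (π z + 1) * (π z - χ z) *
        ((2 * z ^ 2 - (-2 / π z ^ 3 + 3 / π z ^ 2
            + χ z / (π z * (χ z - 1) + χ z) ^ 2) * (z * a))
          / (-(π z * (π z + 1)) / (π z * (χ z - 1) + χ z) ^ 2)) := by
        rw [hbval]; ring
    _ = π z ^ 3 * (π z + 1) * (π z - χ z) *
        ((2 * (1 / π z ^ 2 - 3 / π z + π z / (π z * (χ z - 1) + χ z) - 3)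
            - (-2 / π z ^ 3 + 3 / π z ^ 2 + χ z / (π z * (χ z - 1) + χ z) ^ 2)
              * ((3 + (1 / π z ^ 2 - 3 / π z + π z / (π z * (χ z - 1) + χ z) - 3))
                  * π z ^ 2 + 2 * π z - 1))
          / (-(π z * (π z + 1)) / (π z * (χ z - 1) + χ z) ^ 2)) := by
        rw [hc2, hc1]
    _ = (3 * (1 + 4 * π z + 5 * π z ^ 2 + 2 * π z ^ 3) * χ z ^ 3
            - π z * (11 + 29 * π z + 17 * π z ^ 2) * χ z ^ 2
            + π z ^ 2 * (13 + 17 * π z) * χ z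
            - 5 * π z ^ 3)
        * ((3 + (1 / π z ^ 2 - 3 / π z + π z / (π z * (χ z - 1) + χ z) - 3))
              * π z ^ 2 + 2 * π z - 1) := main
    _ = (3 * (1 + 4 * π z + 5 * π z ^ 2 + 2 * π z ^ 3) * χ z ^ 3
            - π z * (11 + 29 * π z + 17 * π z ^ 2) * χ z ^ 2
            + π z ^ 2 * (13 + 17 * π z) * χ z
            - 5 * π z ^ 3) * (z * a) := by rw [← hc1, ← hc2]
    _ = z * ((3 * (1 + 4 * π z + 5 * π z ^ 2 + 2 * π z ^ 3) * χ z ^ 3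
            - π z * (11 + 29 * π z + 17 * π z ^ 2) * χ z ^ 2
            + π z ^ 2 * (13 + 17 * π z) * χ z
            - 5 * π z ^ 3) * a) := by ring
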